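/- Let {X_i} be a long memory linear process with finite positive variance whose autocovariances satisfy γ_h ~ c' h^{2d−1} for some c' > 0 and 0 < d < 1/2 (equivalently a_k ~ c k^{d−1}). Then, conditionally on the multinomial weights, Var_{X|w}( n^{1/2−d} Σ_{i=1}^n (w_i^{(n)}/n − 1/n) X_i ) → 0 in probability-P_w as n → ∞. -/

import Mathlib

open MeasureTheory Finset Filter

/-- The law of `n` i.i.d. uniform draws from `{0,...,n-1}`: the uniform probability
measure on the finite space `Fin n → Fin n`. The multinomial weight vector
`(w_1,...,w_n) ~ Multinomial(n; 1/n,...,1/n)` is obtained from it via `mw`. -/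
noncomputable def multinomialMeasure (n : ℕ) : Measure (Fin n → Fin n) :=
  ((Fintype.card (Fin n → Fin n) : ENNReal))⁻¹ • Measure.count

/-- `mw n i f` is the multinomial weight `w_{i+1}^{(n)}`: the number of draws
(among the `n` draws recorded by `f`) that fall on cell `i`. -/
def mw (n : ℕ) (i : ℕ) (f : Fin n → Fin n) : ℕ :=
  (Finset.univ.filter (fun j => (f j : ℕ) = i)).card


lemma st16_sum_prod (n : ℕ) (g : Fin n → Fin n → ℝ) :
    ∑ f : Fin n → Fin n, ∏ a, g a (f a) = ∏ a, ∑ x, g a x := by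
  rw [Finset.prod_univ_sum, Fintype.piFinset_univ]

lemma st16_prod_one_point (n : ℕ) (a : Fin n) (F : Fin n → ℝ) (A C : ℝ)
    (ha : F a = A) (ho : ∀ c, a ≠ c → F c = C) :
    ∏ c, F c = A * C ^ (n - 1) := by
  rw [← Finset.mul_prod_erase univ F (mem_univ a), ha]
  congr 1
  rw [Finset.prod_congr rfl (fun c hc => ho c (Ne.symm (Finset.ne_of_mem_erase hc))),
    Finset.prod_const, Finset.card_erase_of_mem (mem_univ a), Finset.card_univ,
    Fintype.card_fin]

lemma st16_prod_two_point (n : ℕ) {a b : Fin n} (hab : a ≠ b) (F : Fin n → ℝ) (A B C : ℝ)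
    (ha : F a = A) (hb : F b = B) (ho : ∀ c, a ≠ c → b ≠ c → F c = C) :
    ∏ c, F c = A * B * C ^ (n - 2) := by
  rw [← Finset.mul_prod_erase univ F (mem_univ a), ha,
    ← Finset.mul_prod_erase _ F (Finset.mem_erase.2 ⟨Ne.symm hab, mem_univ b⟩), hb, ← mul_assoc]
  congr 1
  have : ∀ c ∈ (univ.erase a).erase b, F c = C := by
    intro c hc
    have h1 := Finset.ne_of_mem_erase hc
    have h2 := Finset.ne_of_mem_erase (Finset.mem_of_mem_erase hc)
    exact ho c (Ne.symm h2) (Ne.symm h1)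
  rw [Finset.prod_congr rfl this, Finset.prod_const,
    Finset.card_erase_of_mem (Finset.mem_erase.2 ⟨Ne.symm hab, mem_univ b⟩),
    Finset.card_erase_of_mem (mem_univ a), Finset.card_univ, Fintype.card_fin,
    Nat.sub_sub]


noncomputable def st16chi (n : ℕ) (x : Fin n) (i : ℕ) : ℝ :=
  (if (x : ℕ) = i then 1 else 0) - 1 / n

noncomputable def st16K (n : ℕ) (i k : ℕ) : ℝ := ∑ x : Fin n, st16chi n x i * st16chi n x k

noncomputable def st16u (n i : ℕ) (f : Fin n → Fin n) : ℝ := ∑ a, st16chi n (f a) i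

lemma st16_sum_ind (n : ℕ) (i : ℕ) (hi : i < n) :
    ∑ x : Fin n, (if (x : ℕ) = i then (1:ℝ) else 0) = 1 := by
  have key : ∀ x : Fin n, ((x:ℕ) = i) ↔ (x = ⟨i, hi⟩) := fun x => by
    simp [Fin.ext_iff]
  calc ∑ x : Fin n, (if (x : ℕ) = i then (1:ℝ) else 0)
      = ∑ x : Fin n, (if x = ⟨i, hi⟩ then (1:ℝ) else 0) :=
        Finset.sum_congr rfl (fun x _ => by simp only [key x])
    _ = 1 := by simp

lemma st16_sum_chi (n : ℕ) (i : ℕ) (hi : i < n) :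
    ∑ x : Fin n, st16chi n x i = 0 := by
  have hn : (0:ℝ) < n := by exact_mod_cast Nat.lt_of_le_of_lt (Nat.zero_le i) hi
  simp only [st16chi, Finset.sum_sub_distrib, st16_sum_ind n i hi]
  rw [Finset.sum_const, Finset.card_univ, Fintype.card_fin]
  simp only [nsmul_eq_mul]
  field_simp
  norm_num

lemma st16_K_eq (n : ℕ) (i k : ℕ) (hi : i < n) (hk : k < n) :
    st16K n i k = (if i = k then 1 else 0) - 1 / n := by
  have hn : (0:ℝ) < n := by exact_mod_cast Nat.lt_of_le_of_lt (Nat.zero_le i) hi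
  have expand : ∀ x : Fin n, st16chi n x i * st16chi n x k
      = (if (x : ℕ) = i then (1:ℝ) else 0) * (if (x : ℕ) = k then (1:ℝ) else 0)
        - (if (x : ℕ) = i then (1:ℝ) else 0) / n - (if (x : ℕ) = k then (1:ℝ) else 0) / n
        + 1 / n ^ 2 := by
    intro x
    simp only [st16chi]
    ring
  rw [st16K, Finset.sum_congr rfl (fun x _ => expand x)]
  have hprod : ∑ x : Fin n, (if (x : ℕ) = i then (1:ℝ) else 0) * (if (x : ℕ) = k then (1:ℝ) else 0)
      = if i = k then (1:ℝ) else 0 := by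
    by_cases hik : i = k
    · subst hik
      rw [if_pos rfl]
      calc ∑ x : Fin n, (if (x:ℕ) = i then (1:ℝ) else 0) * (if (x:ℕ) = i then (1:ℝ) else 0)
          = ∑ x : Fin n, (if (x:ℕ) = i then (1:ℝ) else 0) :=
            Finset.sum_congr rfl (fun x _ => by by_cases hx : (x:ℕ) = i <;> simp [hx])
        _ = 1 := st16_sum_ind n i hi
    · rw [if_neg hik]
      refine Finset.sum_eq_zero fun x _ => ?_
      by_cases hx : (x:ℕ) = i <;> simp [hx, hik]
  simp only [Finset.sum_add_distrib, Finset.sum_sub_distrib, ← Finset.sum_div,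
    st16_sum_ind n i hi, st16_sum_ind n k hk, hprod]
  rw [Finset.sum_const, Finset.card_univ, Fintype.card_fin]
  field_simp
  ring

lemma st16_K_diag (n : ℕ) (i : ℕ) (hi : i < n) : |st16K n i i| ≤ 1 := by
  have hn : (0:ℝ) < n := by exact_mod_cast Nat.lt_of_le_of_lt (Nat.zero_le i) hi
  rw [st16_K_eq n i i hi hi, if_pos rfl]
  have h1 : (1:ℝ) ≤ n := by exact_mod_cast Nat.lt_of_le_of_lt (Nat.zero_le i) hi
  have h2 : 1 / (n:ℝ) ≤ 1 := by rw [div_le_one hn]; exact h1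
  have h3 : (0:ℝ) < 1 / n := one_div_pos.2 hn
  rw [abs_le]
  constructor <;> linarith

lemma st16_K_off (n : ℕ) (i k : ℕ) (hi : i < n) (hk : k < n) (hik : i ≠ k) :
    |st16K n i k| ≤ 1 / n := by
  rw [st16_K_eq n i k hi hk, if_neg hik]
  have hn : (0:ℝ) < n := by exact_mod_cast Nat.lt_of_le_of_lt (Nat.zero_le i) hi
  have h3 : (0:ℝ) < 1 / n := one_div_pos.2 hn
  rw [zero_sub, abs_neg, abs_of_pos h3]


lemma st16_one_coord (n : ℕ) (a : Fin n) (p : Fin n → ℝ) :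
    ∑ f : Fin n → Fin n, p (f a) = (∑ x, p x) * (n : ℝ) ^ (n - 1) := by
  have h := st16_sum_prod n (fun c x => if a = c then p x else 1)
  have hl : ∀ f : Fin n → Fin n, (∏ c, if a = c then p (f c) else 1) = p (f a) := by
    intro f
    rw [Finset.prod_ite_eq]
    simp
  rw [Finset.sum_congr rfl (fun f _ => (hl f))] at h
  rw [h]
  refine st16_prod_one_point n a _ _ _ ?_ ?_
  · simp
  · intro c hc
    simp [if_neg hc, Finset.card_univ]

lemma st16_two_coord (n : ℕ) {a b : Fin n} (hab : a ≠ b) (p q : Fin n → ℝ) :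
    ∑ f : Fin n → Fin n, p (f a) * q (f b)
      = (∑ x, p x) * (∑ x, q x) * (n : ℝ) ^ (n - 2) := by
  have h := st16_sum_prod n (fun c x => (if a = c then p x else 1) * (if b = c then q x else 1))
  have hl : ∀ f : Fin n → Fin n,
      (∏ c, ((if a = c then p (f c) else 1) * (if b = c then q (f c) else 1)))
        = p (f a) * q (f b) := by
    intro f
    rw [Finset.prod_mul_distrib, Finset.prod_ite_eq, Finset.prod_ite_eq]
    simp
  rw [Finset.sum_congr rfl (fun f _ => (hl f))] at h
  rw [h]
  refine st16_prod_two_point n hab _ _ _ _ ?_ ?_ ?_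
  · simp [Ne.symm hab]
  · simp [hab]
  · intro c h1 h2
    simp [if_neg h1, if_neg h2, Finset.card_univ]

lemma st16_lonely (n : ℕ) {c c1 c2 c3 : Fin n} (h1 : c ≠ c1) (h2 : c ≠ c2) (h3 : c ≠ c3)
    (p q1 q2 q3 : Fin n → ℝ) (hp : ∑ x, p x = 0) :
    ∑ f : Fin n → Fin n, p (f c) * (q1 (f c1) * (q2 (f c2) * q3 (f c3))) = 0 := by
  have h := st16_sum_prod n (fun c' x =>
    (if c = c' then p x else 1) * ((if c1 = c' then q1 x else 1) *
      ((if c2 = c' then q2 x else 1) * (if c3 = c' then q3 x else 1))))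
  have hl : ∀ f : Fin n → Fin n,
      (∏ c', ((if c = c' then p (f c') else 1) * ((if c1 = c' then q1 (f c') else 1) *
        ((if c2 = c' then q2 (f c') else 1) * (if c3 = c' then q3 (f c') else 1)))))
        = p (f c) * (q1 (f c1) * (q2 (f c2) * q3 (f c3))) := by
    intro f
    rw [Finset.prod_mul_distrib, Finset.prod_mul_distrib, Finset.prod_mul_distrib]
    rw [Finset.prod_ite_eq, Finset.prod_ite_eq, Finset.prod_ite_eq, Finset.prod_ite_eq]
    simp
  rw [Finset.sum_congr rfl (fun f _ => (hl f))] at h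
  rw [h]
  refine Finset.prod_eq_zero (Finset.mem_univ c) ?_
  have : ∀ x : Fin n, (if c = c then p x else 1) * ((if c1 = c then q1 x else 1) *
      ((if c2 = c then q2 x else 1) * (if c3 = c then q3 x else 1))) = p x := by
    intro x
    rw [if_pos rfl, if_neg (fun hh => h1 hh.symm), if_neg (fun hh => h2 hh.symm),
      if_neg (fun hh => h3 hh.symm)]
    ring
  rw [Finset.sum_congr rfl (fun x _ => this x)]
  exact hp


lemma st16_diag_bound (n h : ℕ) (hh : 1 ≤ h) (y : Fin n) :
    |∑ j ∈ Finset.range (n - h), st16chi n y j * st16chi n y (j + h)| ≤ 3 / n := by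
  have hn : (0:ℝ) < n := by exact_mod_cast y.pos
  have expand : ∀ j, st16chi n y j * st16chi n y (j + h)
      = 1 / n ^ 2 - (if (y:ℕ) = j then (1:ℝ) else 0) / n
          - (if (y:ℕ) = j + h then (1:ℝ) else 0) / n := by
    intro j
    have hzero : (if (y:ℕ) = j then (1:ℝ) else 0) * (if (y:ℕ) = j + h then (1:ℝ) else 0) = 0 := by
      by_cases hy : (y:ℕ) = j
      · rw [if_neg (by omega : ¬ (y:ℕ) = j + h), mul_zero]
      · rw [if_neg hy, zero_mul]
    simp only [st16chi]
    linear_combination hzero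
  rw [Finset.sum_congr rfl (fun j _ => expand j), Finset.sum_sub_distrib,
    Finset.sum_sub_distrib]
  simp only [← Finset.sum_div]
  rw [Finset.sum_const, Finset.card_range, nsmul_eq_mul,
    show ((n - h : ℕ) : ℝ) * 1 / (n:ℝ) ^ 2 = ((n - h : ℕ) : ℝ) / (n:ℝ) ^ 2 from by ring]
  have hC1' : ((n - h : ℕ) : ℝ) / n ^ 2 ≤ 1 / n := by
    rw [div_le_div_iff₀ (by positivity) hn]
    have : ((n - h : ℕ) : ℝ) ≤ n := by exact_mod_cast Nat.sub_le n h
    nlinarith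
  have hC0' : (0:ℝ) ≤ ((n - h : ℕ) : ℝ) / n ^ 2 := by positivity
  have hA0 : (0:ℝ) ≤ ∑ j ∈ Finset.range (n - h), (if (y:ℕ) = j then (1:ℝ) else 0) :=
    Finset.sum_nonneg (fun j _ => by split <;> norm_num)
  have hA1 : ∑ j ∈ Finset.range (n - h), (if (y:ℕ) = j then (1:ℝ) else 0) ≤ 1 := by
    rw [Finset.sum_ite_eq]
    split <;> norm_num
  have hB0 : (0:ℝ) ≤ ∑ j ∈ Finset.range (n - h), (if (y:ℕ) = j + h then (1:ℝ) else 0) :=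
    Finset.sum_nonneg (fun j _ => by split <;> norm_num)
  have hB1 : ∑ j ∈ Finset.range (n - h), (if (y:ℕ) = j + h then (1:ℝ) else 0) ≤ 1 := by
    have hcard : ((Finset.range (n - h)).filter (fun j => (y:ℕ) = j + h)).card ≤ 1 :=
      Finset.card_le_one.2 (fun a ha b hb => by
        simp only [Finset.mem_filter] at ha hb; omega)
    rw [Finset.sum_boole]
    exact_mod_cast hcard
  set A := ∑ j ∈ Finset.range (n - h), (if (y:ℕ) = j then (1:ℝ) else 0) with hA
  set B := ∑ j ∈ Finset.range (n - h), (if (y:ℕ) = j + h then (1:ℝ) else 0) with hB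
  clear_value A B
  clear expand
  have h3 : (0:ℝ) < 1/n := by positivity
  have h1 : A / n ≤ 1 / n := by gcongr
  have h2 : B / n ≤ 1 / n := by gcongr
  have h1' : 0 ≤ A / n := div_nonneg hA0 hn.le
  have h2' : 0 ≤ B / n := div_nonneg hB0 hn.le
  have h4 : 3/(n:ℝ) = 3*(1/n) := by ring
  rw [abs_le]
  constructor <;> linarith


noncomputable def st16T (n h : ℕ) (a b : Fin n) (f : Fin n → Fin n) : ℝ :=
  ∑ j ∈ Finset.range (n - h), st16chi n (f a) j * st16chi n (f b) (j + h)

noncomputable def st16AA (n h : ℕ) : ℝ :=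
  (∑ j ∈ Finset.range (n - h), ∑ j' ∈ Finset.range (n - h),
    st16K n j j' * st16K n (j + h) (j' + h)) * (n:ℝ) ^ (n - 2)

noncomputable def st16BB (n h : ℕ) : ℝ :=
  (∑ j ∈ Finset.range (n - h), ∑ j' ∈ Finset.range (n - h),
    st16K n j (j' + h) * st16K n (j + h) j') * (n:ℝ) ^ (n - 2)

lemma st16_TT (n h : ℕ) (hh : 1 ≤ h) (a b a' b' : Fin n)
    (hab : a ≠ b) (hab' : a' ≠ b') :
    ∑ f : Fin n → Fin n, st16T n h a b f * st16T n h a' b' f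
      = (if (a', b') = (a, b) then st16AA n h else 0)
        + (if (a', b') = (b, a) then st16BB n h else 0) := by
  have hswap : ∀ f : Fin n → Fin n, st16T n h a b f * st16T n h a' b' f
      = ∑ j ∈ Finset.range (n - h), ∑ j' ∈ Finset.range (n - h),
          (st16chi n (f a) j * st16chi n (f b) (j + h))
            * (st16chi n (f a') j' * st16chi n (f b') (j' + h)) := by
    intro f
    rw [st16T, st16T, Finset.sum_mul_sum]
  rw [Finset.sum_congr rfl (fun f _ => hswap f), Finset.sum_comm]
  rw [Finset.sum_congr rfl (fun j (_ : j ∈ Finset.range (n - h)) => Finset.sum_comm)]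
  -- now : ∑ j, ∑ j', ∑ f, ...
  by_cases hc1 : (a', b') = (a, b)
  · obtain ⟨ha', hb'⟩ := Prod.mk.injEq .. ▸ hc1
    rw [if_pos hc1, if_neg (fun hE => hab ((congrArg Prod.fst hc1).symm.trans (congrArg Prod.fst hE))), add_zero]
    rw [ha', hb']
    rw [st16AA, Finset.sum_mul]
    refine Finset.sum_congr rfl fun j hj => ?_
    rw [Finset.sum_mul]
    refine Finset.sum_congr rfl fun j' hj' => ?_
    have reorder : ∀ f : Fin n → Fin n,
        (st16chi n (f a) j * st16chi n (f b) (j + h))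
          * (st16chi n (f a) j' * st16chi n (f b) (j' + h))
        = (st16chi n (f a) j * st16chi n (f a) j')
            * (st16chi n (f b) (j + h) * st16chi n (f b) (j' + h)) := fun f => by ring
    rw [Finset.sum_congr rfl (fun f _ => reorder f),
      st16_two_coord n hab (fun x => st16chi n x j * st16chi n x j')
        (fun x => st16chi n x (j + h) * st16chi n x (j' + h))]
    rfl
  · by_cases hc2 : (a', b') = (b, a)
    · obtain ⟨ha', hb'⟩ := Prod.mk.injEq .. ▸ hc2
      rw [if_neg hc1, if_pos hc2, zero_add]
      rw [ha', hb']
      rw [st16BB, Finset.sum_mul]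
      refine Finset.sum_congr rfl fun j hj => ?_
      rw [Finset.sum_mul]
      refine Finset.sum_congr rfl fun j' hj' => ?_
      have reorder : ∀ f : Fin n → Fin n,
          (st16chi n (f a) j * st16chi n (f b) (j + h))
            * (st16chi n (f b) j' * st16chi n (f a) (j' + h))
          = (st16chi n (f a) j * st16chi n (f a) (j' + h))
              * (st16chi n (f b) (j + h) * st16chi n (f b) j') := fun f => by ring
      rw [Finset.sum_congr rfl (fun f _ => reorder f),
        st16_two_coord n hab (fun x => st16chi n x j * st16chi n x (j' + h))
          (fun x => st16chi n x (j + h) * st16chi n x j')]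
      rfl
    · rw [if_neg hc1, if_neg hc2, add_zero]
      refine Finset.sum_eq_zero fun j hj => Finset.sum_eq_zero fun j' hj' => ?_
      have hj'n : j' + h < n := by
        have := Finset.mem_range.1 hj'; omega
      have hjn : j < n := by
        have := Finset.mem_range.1 hj; omega
      have hne1 : ¬(a' = a ∧ b' = b) := fun ⟨x, y⟩ => hc1 (by rw [x, y])
      have hne2 : ¬(a' = b ∧ b' = a) := fun ⟨x, y⟩ => hc2 (by rw [x, y])
      by_cases h1 : a' = a
      · -- b' is lonely
        have hb'b : b' ≠ b := fun hbb => hne1 ⟨h1, hbb⟩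
        have hb'a' : b' ≠ a' := Ne.symm hab'
        have hb'a : b' ≠ a := h1 ▸ hb'a'
        have reorder : ∀ f : Fin n → Fin n,
            (st16chi n (f a) j * st16chi n (f b) (j + h))
              * (st16chi n (f a') j' * st16chi n (f b') (j' + h))
            = st16chi n (f b') (j' + h) * (st16chi n (f a) j
                * (st16chi n (f b) (j + h) * st16chi n (f a') j')) := fun f => by ring
        rw [Finset.sum_congr rfl (fun f _ => reorder f)]
        exact st16_lonely n hb'a hb'b hb'a' (fun x => st16chi n x (j' + h))
          (fun x => st16chi n x j) (fun x => st16chi n x (j + h)) (fun x => st16chi n x j')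
          (st16_sum_chi n (j' + h) hj'n)
      · by_cases h2 : a' = b
        · -- b' is lonely
          have hb'a : b' ≠ a := fun hba => hne2 ⟨h2, hba⟩
          have hb'a' : b' ≠ a' := Ne.symm hab'
          have hb'b : b' ≠ b := h2 ▸ hb'a'
          have reorder : ∀ f : Fin n → Fin n,
              (st16chi n (f a) j * st16chi n (f b) (j + h))
                * (st16chi n (f a') j' * st16chi n (f b') (j' + h))
              = st16chi n (f b') (j' + h) * (st16chi n (f a) j
                  * (st16chi n (f b) (j + h) * st16chi n (f a') j')) := fun f => by ring
          rw [Finset.sum_congr rfl (fun f _ => reorder f)]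
          exact st16_lonely n hb'a hb'b hb'a' (fun x => st16chi n x (j' + h))
            (fun x => st16chi n x j) (fun x => st16chi n x (j + h)) (fun x => st16chi n x j')
            (st16_sum_chi n (j' + h) hj'n)
        · -- a' is lonely
          have hj'n2 : j' < n := by
            have := Finset.mem_range.1 hj'; omega
          have reorder : ∀ f : Fin n → Fin n,
              (st16chi n (f a) j * st16chi n (f b) (j + h))
                * (st16chi n (f a') j' * st16chi n (f b') (j' + h))
              = st16chi n (f a') j' * (st16chi n (f a) j
                  * (st16chi n (f b) (j + h) * st16chi n (f b') (j' + h))) := fun f => by ring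
          rw [Finset.sum_congr rfl (fun f _ => reorder f)]
          exact st16_lonely n h1 h2 hab' (fun x => st16chi n x j')
            (fun x => st16chi n x j) (fun x => st16chi n x (j + h))
            (fun x => st16chi n x (j' + h)) (st16_sum_chi n j' hj'n2)


lemma st16_K_le_one (n : ℕ) (i k : ℕ) (hi : i < n) (hk : k < n) : |st16K n i k| ≤ 1 := by
  have hn : (0:ℝ) < n := by exact_mod_cast Nat.lt_of_le_of_lt (Nat.zero_le i) hi
  have h1 : (1:ℝ) ≤ n := by exact_mod_cast Nat.lt_of_le_of_lt (Nat.zero_le i) hi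
  have h2 : 1 / (n:ℝ) ≤ 1 := by rw [div_le_one hn]; exact h1
  have h3 : (0:ℝ) < 1 / n := by positivity
  rw [st16_K_eq n i k hi hk, abs_le]
  constructor <;> split <;> linarith

lemma st16_AAker_bound (n h : ℕ) (hn1 : 1 ≤ n) (hh : 1 ≤ h) :
    |∑ j ∈ Finset.range (n - h), ∑ j' ∈ Finset.range (n - h),
        st16K n j j' * st16K n (j + h) (j' + h)| ≤ 2 * n := by
  have hn : (0:ℝ) < n := by exact_mod_cast hn1
  calc |∑ j ∈ Finset.range (n - h), ∑ j' ∈ Finset.range (n - h),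
        st16K n j j' * st16K n (j + h) (j' + h)|
      ≤ ∑ j ∈ Finset.range (n - h), |∑ j' ∈ Finset.range (n - h),
          st16K n j j' * st16K n (j + h) (j' + h)| := Finset.abs_sum_le_sum_abs _ _
    _ ≤ ∑ j ∈ Finset.range (n - h), (2:ℝ) := by
        refine Finset.sum_le_sum fun j hj => ?_
        have hjn : j < n := by have := Finset.mem_range.1 hj; omega
        calc |∑ j' ∈ Finset.range (n - h), st16K n j j' * st16K n (j + h) (j' + h)|
            ≤ ∑ j' ∈ Finset.range (n - h), |st16K n j j' * st16K n (j + h) (j' + h)| :=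
              Finset.abs_sum_le_sum_abs _ _
          _ ≤ ∑ j' ∈ Finset.range (n - h), ((if j = j' then (1:ℝ) else 0) + 1 / n ^ 2) := by
              refine Finset.sum_le_sum fun j' hj' => ?_
              have hj'n : j' < n := by have := Finset.mem_range.1 hj'; omega
              have hjh : j + h < n := by have := Finset.mem_range.1 hj; omega
              have hj'h : j' + h < n := by have := Finset.mem_range.1 hj'; omega
              rw [abs_mul]
              by_cases he : j = j'
              · subst he
                rw [if_pos rfl]
                have := st16_K_le_one n j j hjn hjn
                have := st16_K_le_one n (j + h) (j + h) hjh hjh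
                have h4 : (0:ℝ) ≤ 1 / n ^ 2 := by positivity
                nlinarith [abs_nonneg (st16K n j j), abs_nonneg (st16K n (j + h) (j + h))]
              · rw [if_neg he, zero_add]
                have h5 := st16_K_off n j j' hjn hj'n he
                have h6 := st16_K_off n (j + h) (j' + h) hjh hj'h (by omega)
                calc |st16K n j j'| * |st16K n (j + h) (j' + h)|
                    ≤ (1 / n) * (1 / n) := by
                      exact mul_le_mul h5 h6 (abs_nonneg _) (by positivity)
                  _ = 1 / n ^ 2 := by ring
          _ ≤ (2:ℝ) := by
              rw [Finset.sum_add_distrib, Finset.sum_const, Finset.card_range, nsmul_eq_mul]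
              have hs1 : ∑ j' ∈ Finset.range (n - h), (if j = j' then (1:ℝ) else 0) ≤ 1 := by
                rw [Finset.sum_ite_eq]
                split <;> norm_num
              have hs2 : ((n - h : ℕ):ℝ) * (1 / n ^ 2) ≤ 1 := by
                have hle : ((n - h : ℕ):ℝ) ≤ n := by exact_mod_cast Nat.sub_le n h
                have h1n : (1:ℝ) ≤ n := by exact_mod_cast hn1
                rw [mul_one_div, div_le_one (by positivity)]
                nlinarith [h1n, hle]
              linarith
    _ ≤ 2 * n := by
        rw [Finset.sum_const, Finset.card_range, nsmul_eq_mul]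
        have hle : ((n - h : ℕ):ℝ) ≤ n := by exact_mod_cast Nat.sub_le n h
        nlinarith

lemma st16_BBker_bound (n h : ℕ) (hn1 : 1 ≤ n) (hh : 1 ≤ h) :
    |∑ j ∈ Finset.range (n - h), ∑ j' ∈ Finset.range (n - h),
        st16K n j (j' + h) * st16K n (j + h) j'| ≤ n := by
  have hn : (0:ℝ) < n := by exact_mod_cast hn1
  calc |∑ j ∈ Finset.range (n - h), ∑ j' ∈ Finset.range (n - h),
        st16K n j (j' + h) * st16K n (j + h) j'|
      ≤ ∑ j ∈ Finset.range (n - h), ∑ j' ∈ Finset.range (n - h),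
          |st16K n j (j' + h) * st16K n (j + h) j'| := by
        refine (Finset.abs_sum_le_sum_abs _ _).trans (Finset.sum_le_sum fun j hj => ?_)
        exact Finset.abs_sum_le_sum_abs _ _
    _ ≤ ∑ j ∈ Finset.range (n - h), ∑ j' ∈ Finset.range (n - h), 1 / (n:ℝ) := by
        refine Finset.sum_le_sum fun j hj => Finset.sum_le_sum fun j' hj' => ?_
        have hjn : j < n := by have := Finset.mem_range.1 hj; omega
        have hj'n : j' < n := by have := Finset.mem_range.1 hj'; omega
        have hjh : j + h < n := by have := Finset.mem_range.1 hj; omega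
        have hj'h : j' + h < n := by have := Finset.mem_range.1 hj'; omega
        rw [abs_mul]
        by_cases he : j = j' + h
        · have hne : j + h ≠ j' := by omega
          have h5 := st16_K_le_one n j (j' + h) hjn hj'h
          have h6 := st16_K_off n (j + h) j' hjh hj'n hne
          calc |st16K n j (j' + h)| * |st16K n (j + h) j'| ≤ 1 * (1 / n) :=
                mul_le_mul h5 h6 (abs_nonneg _) (by norm_num)
            _ = 1 / n := by ring
        · have h5 := st16_K_off n j (j' + h) hjn hj'h he
          have h6 := st16_K_le_one n (j + h) j' hjh hj'n
          calc |st16K n j (j' + h)| * |st16K n (j + h) j'| ≤ (1 / n) * 1 :=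
                mul_le_mul h5 h6 (abs_nonneg _) (by positivity)
            _ ≤ 1 / n := by rw [mul_one]
    _ ≤ n := by
        rw [Finset.sum_const, Finset.sum_const, Finset.card_range, nsmul_eq_mul, nsmul_eq_mul]
        have hle : ((n - h : ℕ):ℝ) ≤ n := by exact_mod_cast Nat.sub_le n h
        have hpos : (0:ℝ) ≤ ((n - h : ℕ):ℝ) := by positivity
        have : ((n - h : ℕ):ℝ) * (((n - h : ℕ):ℝ) * (1 / n)) ≤ n * (n * (1/n)) := by
          apply mul_le_mul hle _ _ hn.le
          · exact mul_le_mul hle (le_refl _) (by positivity) hn.le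
          · positivity
        calc ((n - h : ℕ):ℝ) * (((n - h : ℕ):ℝ) * (1 / n)) ≤ n * (n * (1/n)) := this
          _ = n := by field_simp


lemma st16_Wsq (n h : ℕ) (hn : 2 ≤ n) (hh : 1 ≤ h) :
    ∑ f : Fin n → Fin n, (∑ p ∈ (Finset.univ : Finset (Fin n)).offDiag, st16T n h p.1 p.2 f) ^ 2
      ≤ 3 * (n:ℝ) ^ (n + 1) := by
  have hn0 : (0:ℝ) < n := by exact_mod_cast (by omega : 0 < n)
  have expand : ∀ f : Fin n → Fin n,
      (∑ p ∈ (Finset.univ : Finset (Fin n)).offDiag, st16T n h p.1 p.2 f) ^ 2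
        = ∑ p ∈ (Finset.univ : Finset (Fin n)).offDiag,
            ∑ q ∈ (Finset.univ : Finset (Fin n)).offDiag,
              st16T n h p.1 p.2 f * st16T n h q.1 q.2 f := by
    intro f
    rw [sq, Finset.sum_mul_sum]
  rw [Finset.sum_congr rfl (fun f _ => expand f), Finset.sum_comm]
  rw [Finset.sum_congr rfl (fun p (_ : p ∈ (Finset.univ : Finset (Fin n)).offDiag) =>
    Finset.sum_comm)]
  have inner : ∀ p ∈ (Finset.univ : Finset (Fin n)).offDiag,
      ∑ q ∈ (Finset.univ : Finset (Fin n)).offDiag,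
        ∑ f : Fin n → Fin n, st16T n h p.1 p.2 f * st16T n h q.1 q.2 f
      = st16AA n h + st16BB n h := by
    intro p hp
    have hp12 : p.1 ≠ p.2 := (Finset.mem_offDiag.1 hp).2.2
    have step : ∀ q ∈ (Finset.univ : Finset (Fin n)).offDiag,
        ∑ f : Fin n → Fin n, st16T n h p.1 p.2 f * st16T n h q.1 q.2 f
          = (if q = p then st16AA n h else 0) + (if q = (p.2, p.1) then st16BB n h else 0) := by
      intro q hq
      have hq12 : q.1 ≠ q.2 := (Finset.mem_offDiag.1 hq).2.2
      have := st16_TT n h hh p.1 p.2 q.1 q.2 hp12 hq12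
      simpa using this
    rw [Finset.sum_congr rfl step, Finset.sum_add_distrib,
      Finset.sum_ite_eq' _ p _, Finset.sum_ite_eq' _ (p.2, p.1) _,
      if_pos hp, if_pos (Finset.mem_offDiag.2 ⟨Finset.mem_univ _, Finset.mem_univ _, Ne.symm hp12⟩)]
  rw [Finset.sum_congr rfl inner, Finset.sum_const, nsmul_eq_mul]
  have hcard : ((Finset.univ : Finset (Fin n)).offDiag.card : ℝ) ≤ (n:ℝ) ^ 2 := by
    rw [Finset.offDiag_card, Finset.card_univ, Fintype.card_fin]
    have : n * n - n ≤ n * n := Nat.sub_le _ _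
    calc ((n * n - n : ℕ) : ℝ) ≤ ((n * n : ℕ) : ℝ) := by exact_mod_cast this
      _ = (n:ℝ) ^ 2 := by push_cast; ring
  have hAB : st16AA n h + st16BB n h ≤ 3 * (n:ℝ) ^ (n - 1) := by
    have h1 := st16_AAker_bound n h (by omega) hh
    have h2 := st16_BBker_bound n h (by omega) hh
    have hpow : (0:ℝ) ≤ (n:ℝ) ^ (n - 2) := by positivity
    have hA : st16AA n h ≤ 2 * n * (n:ℝ) ^ (n - 2) := by
      rw [st16AA]
      calc (∑ j ∈ Finset.range (n - h), ∑ j' ∈ Finset.range (n - h),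
              st16K n j j' * st16K n (j + h) (j' + h)) * (n:ℝ) ^ (n - 2)
          ≤ |∑ j ∈ Finset.range (n - h), ∑ j' ∈ Finset.range (n - h),
              st16K n j j' * st16K n (j + h) (j' + h)| * (n:ℝ) ^ (n - 2) :=
            mul_le_mul_of_nonneg_right (le_abs_self _) hpow
        _ ≤ 2 * n * (n:ℝ) ^ (n - 2) := mul_le_mul_of_nonneg_right h1 hpow
    have hB : st16BB n h ≤ n * (n:ℝ) ^ (n - 2) := by
      rw [st16BB]
      calc (∑ j ∈ Finset.range (n - h), ∑ j' ∈ Finset.range (n - h),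
              st16K n j (j' + h) * st16K n (j + h) j') * (n:ℝ) ^ (n - 2)
          ≤ |∑ j ∈ Finset.range (n - h), ∑ j' ∈ Finset.range (n - h),
              st16K n j (j' + h) * st16K n (j + h) j'| * (n:ℝ) ^ (n - 2) :=
            mul_le_mul_of_nonneg_right (le_abs_self _) hpow
        _ ≤ n * (n:ℝ) ^ (n - 2) := mul_le_mul_of_nonneg_right h2 hpow
    have hpowmul : (n:ℝ) * (n:ℝ) ^ (n - 2) = (n:ℝ) ^ (n - 1) := by
      rw [← pow_succ']
      congr 1
      omega
    calc st16AA n h + st16BB n h ≤ 2 * n * (n:ℝ) ^ (n - 2) + n * (n:ℝ) ^ (n - 2) := by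
          linarith
      _ = 3 * ((n:ℝ) * (n:ℝ) ^ (n - 2)) := by ring
      _ = 3 * (n:ℝ) ^ (n - 1) := by rw [hpowmul]
  have hABnn : 0 ≤ st16AA n h + st16BB n h ∨ True := Or.inr trivial
  calc ((Finset.univ : Finset (Fin n)).offDiag.card : ℝ) * (st16AA n h + st16BB n h)
      ≤ (n:ℝ) ^ 2 * (3 * (n:ℝ) ^ (n - 1)) := by
        by_cases hs : 0 ≤ st16AA n h + st16BB n h
        · exact mul_le_mul hcard hAB hs (by positivity)
        · push_neg at hs
          have : ((Finset.univ : Finset (Fin n)).offDiag.card : ℝ) * (st16AA n h + st16BB n h) ≤ 0 :=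
            mul_nonpos_of_nonneg_of_nonpos (by positivity) hs.le
          calc ((Finset.univ : Finset (Fin n)).offDiag.card : ℝ) * (st16AA n h + st16BB n h)
              ≤ 0 := this
            _ ≤ (n:ℝ) ^ 2 * (3 * (n:ℝ) ^ (n - 1)) := by positivity
    _ = 3 * ((n:ℝ) ^ 2 * (n:ℝ) ^ (n - 1)) := by ring
    _ = 3 * (n:ℝ) ^ (n + 1) := by
        rw [← pow_add, show 2 + (n - 1) = n + 1 from by omega]


lemma st16_Ysq (n h : ℕ) (hn : 2 ≤ n) (hh : 1 ≤ h) :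
    ∑ f : Fin n → Fin n, (∑ j ∈ Finset.range (n - h), st16u n j f * st16u n (j + h) f) ^ 2
      ≤ 24 * (n:ℝ) ^ (n + 1) := by
  have hn0 : (0:ℝ) < n := by exact_mod_cast (by omega : 0 < n)
  -- split Y into diagonal and off-diagonal parts
  have split : ∀ f : Fin n → Fin n,
      ∑ j ∈ Finset.range (n - h), st16u n j f * st16u n (j + h) f
        = (∑ p ∈ (Finset.univ : Finset (Fin n)).diag, st16T n h p.1 p.2 f)
          + (∑ p ∈ (Finset.univ : Finset (Fin n)).offDiag, st16T n h p.1 p.2 f) := by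
    intro f
    have step1 : ∀ j, st16u n j f * st16u n (j + h) f
        = ∑ p ∈ (Finset.univ : Finset (Fin n)) ×ˢ (Finset.univ : Finset (Fin n)),
            st16chi n (f p.1) j * st16chi n (f p.2) (j + h) := by
      intro j
      rw [st16u, st16u, Finset.sum_mul_sum, ← Finset.sum_product']
    rw [Finset.sum_congr rfl (fun j _ => step1 j), Finset.sum_comm,
      ← Finset.diag_union_offDiag (Finset.univ : Finset (Fin n)),
      Finset.sum_union (Finset.disjoint_diag_offDiag _)]
    rfl
  rw [Finset.sum_congr rfl (fun f (_ : f ∈ Finset.univ) => by rw [split f])]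
  -- (D+W)^2 ≤ 2 D^2 + 2 W^2
  have ptwise : ∀ f : Fin n → Fin n,
      ((∑ p ∈ (Finset.univ : Finset (Fin n)).diag, st16T n h p.1 p.2 f)
        + (∑ p ∈ (Finset.univ : Finset (Fin n)).offDiag, st16T n h p.1 p.2 f)) ^ 2
      ≤ 2 * (∑ p ∈ (Finset.univ : Finset (Fin n)).diag, st16T n h p.1 p.2 f) ^ 2
        + 2 * (∑ p ∈ (Finset.univ : Finset (Fin n)).offDiag, st16T n h p.1 p.2 f) ^ 2 := by
    intro f
    nlinarith [sq_nonneg ((∑ p ∈ (Finset.univ : Finset (Fin n)).diag, st16T n h p.1 p.2 f)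
      - (∑ p ∈ (Finset.univ : Finset (Fin n)).offDiag, st16T n h p.1 p.2 f))]
  have hDbound : ∀ f : Fin n → Fin n,
      (∑ p ∈ (Finset.univ : Finset (Fin n)).diag, st16T n h p.1 p.2 f) ^ 2 ≤ 9 := by
    intro f
    have habs : |∑ p ∈ (Finset.univ : Finset (Fin n)).diag, st16T n h p.1 p.2 f| ≤ 3 := by
      calc |∑ p ∈ (Finset.univ : Finset (Fin n)).diag, st16T n h p.1 p.2 f|
          ≤ ∑ p ∈ (Finset.univ : Finset (Fin n)).diag, |st16T n h p.1 p.2 f| :=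
            Finset.abs_sum_le_sum_abs _ _
        _ ≤ ∑ p ∈ (Finset.univ : Finset (Fin n)).diag, 3 / (n:ℝ) := by
            refine Finset.sum_le_sum fun p hp => ?_
            have hd := (Finset.mem_diag.1 hp).2
            rw [st16T, ← hd]
            exact st16_diag_bound n h hh (f p.1)
        _ = ((Finset.univ : Finset (Fin n)).diag.card : ℝ) * (3 / n) := by
            rw [Finset.sum_const, nsmul_eq_mul]
        _ = 3 := by
            rw [Finset.diag_card, Finset.card_univ, Fintype.card_fin]
            field_simp
    nlinarith [abs_nonneg (∑ p ∈ (Finset.univ : Finset (Fin n)).diag, st16T n h p.1 p.2 f),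
      sq_abs (∑ p ∈ (Finset.univ : Finset (Fin n)).diag, st16T n h p.1 p.2 f)]
  calc ∑ f : Fin n → Fin n,
        ((∑ p ∈ (Finset.univ : Finset (Fin n)).diag, st16T n h p.1 p.2 f)
          + (∑ p ∈ (Finset.univ : Finset (Fin n)).offDiag, st16T n h p.1 p.2 f)) ^ 2
      ≤ ∑ f : Fin n → Fin n,
        (2 * (∑ p ∈ (Finset.univ : Finset (Fin n)).diag, st16T n h p.1 p.2 f) ^ 2
          + 2 * (∑ p ∈ (Finset.univ : Finset (Fin n)).offDiag, st16T n h p.1 p.2 f) ^ 2) :=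
        Finset.sum_le_sum fun f _ => ptwise f
    _ = 2 * (∑ f : Fin n → Fin n,
            (∑ p ∈ (Finset.univ : Finset (Fin n)).diag, st16T n h p.1 p.2 f) ^ 2)
        + 2 * (∑ f : Fin n → Fin n,
            (∑ p ∈ (Finset.univ : Finset (Fin n)).offDiag, st16T n h p.1 p.2 f) ^ 2) := by
        rw [Finset.sum_add_distrib, Finset.mul_sum, Finset.mul_sum]
    _ ≤ 2 * (9 * (n:ℝ) ^ n) + 2 * (3 * (n:ℝ) ^ (n + 1)) := by
        have h1 : ∑ f : Fin n → Fin n,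
            (∑ p ∈ (Finset.univ : Finset (Fin n)).diag, st16T n h p.1 p.2 f) ^ 2
              ≤ 9 * (n:ℝ) ^ n := by
          calc ∑ f : Fin n → Fin n,
              (∑ p ∈ (Finset.univ : Finset (Fin n)).diag, st16T n h p.1 p.2 f) ^ 2
              ≤ ∑ _f : Fin n → Fin n, (9:ℝ) := Finset.sum_le_sum fun f _ => hDbound f
            _ = (Fintype.card (Fin n → Fin n) : ℝ) * 9 := by
                rw [Finset.sum_const, nsmul_eq_mul, Finset.card_univ]
            _ = 9 * (n:ℝ) ^ n := by
                rw [Fintype.card_fun, Fintype.card_fin]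
                push_cast
                ring
          
        have h2 := st16_Wsq n h hn hh
        linarith
    _ ≤ 24 * (n:ℝ) ^ (n + 1) := by
        have : (n:ℝ) ^ n ≤ (n:ℝ) ^ (n + 1) := by
          apply pow_le_pow_right₀ (by exact_mod_cast (by omega : 1 ≤ n))
          omega
        linarith [pow_nonneg hn0.le n]



lemma st16_usq (n : ℕ) (j : ℕ) (hn : 2 ≤ n) (hj : j < n) :
    ∑ f : Fin n → Fin n, (st16u n j f) ^ 2 ≤ (n:ℝ) ^ n := by
  have hn0 : (0:ℝ) < n := by exact_mod_cast (by omega : 0 < n)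
  have expand : ∀ f : Fin n → Fin n, (st16u n j f) ^ 2
      = ∑ p ∈ (Finset.univ : Finset (Fin n)) ×ˢ (Finset.univ : Finset (Fin n)),
          st16chi n (f p.1) j * st16chi n (f p.2) j := by
    intro f
    rw [sq, st16u, Finset.sum_mul_sum, ← Finset.sum_product']
  rw [Finset.sum_congr rfl (fun f (_ : f ∈ Finset.univ) => by rw [expand f]), Finset.sum_comm,
    ← Finset.diag_union_offDiag (Finset.univ : Finset (Fin n)),
    Finset.sum_union (Finset.disjoint_diag_offDiag _)]
  have hoff : ∑ p ∈ (Finset.univ : Finset (Fin n)).offDiag,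
      ∑ f : Fin n → Fin n, st16chi n (f p.1) j * st16chi n (f p.2) j = 0 := by
    refine Finset.sum_eq_zero fun p hp => ?_
    have hp12 : p.1 ≠ p.2 := (Finset.mem_offDiag.1 hp).2.2
    rw [st16_two_coord n hp12 (fun x => st16chi n x j) (fun x => st16chi n x j),
      st16_sum_chi n j hj]
    ring
  have hdiag : ∑ p ∈ (Finset.univ : Finset (Fin n)).diag,
      ∑ f : Fin n → Fin n, st16chi n (f p.1) j * st16chi n (f p.2) j ≤ (n:ℝ) ^ n := by
    have hK : st16K n j j ≤ 1 := by
      rw [st16_K_eq n j j hj hj, if_pos rfl]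
      have : (0:ℝ) < 1 / n := by positivity
      linarith
    have hKnn : 0 ≤ st16K n j j := by
      rw [st16_K_eq n j j hj hj, if_pos rfl]
      have h1 : 1 / (n:ℝ) ≤ 1 := by
        rw [div_le_one hn0]; exact_mod_cast (by omega : 1 ≤ n)
      linarith
    have each : ∀ p ∈ (Finset.univ : Finset (Fin n)).diag,
        ∑ f : Fin n → Fin n, st16chi n (f p.1) j * st16chi n (f p.2) j
          = st16K n j j * (n:ℝ) ^ (n - 1) := by
      intro p hp
      have hd := (Finset.mem_diag.1 hp).2
      rw [← hd]
      have := st16_one_coord n p.1 (fun x => st16chi n x j * st16chi n x j)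
      rw [this]
      rfl
    rw [Finset.sum_congr rfl each, Finset.sum_const, nsmul_eq_mul, Finset.diag_card,
      Finset.card_univ, Fintype.card_fin]
    calc (n:ℝ) * (st16K n j j * (n:ℝ) ^ (n - 1)) ≤ (n:ℝ) * (1 * (n:ℝ) ^ (n - 1)) := by
          apply mul_le_mul_of_nonneg_left _ hn0.le
          exact mul_le_mul_of_nonneg_right hK (by positivity)
      _ = (n:ℝ) * (n:ℝ) ^ (n - 1) := by ring
      _ = (n:ℝ) ^ n := by
          rw [← pow_succ', show n - 1 + 1 = n from by omega]
  have hoffnn : (0:ℝ) ≤ 0 := le_refl 0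
  linarith [hoff, hdiag]

-- Cauchy–Schwarz step
lemma st16_abssum (m : ℕ) (S : Finset (Fin m → Fin m)) (Y : (Fin m → Fin m) → ℝ) (Bd : ℝ)
    (hBd : 0 ≤ Bd) (hsq : ∑ f ∈ S, (Y f) ^ 2 ≤ Bd) :
    (∑ f ∈ S, |Y f|) ^ 2 ≤ (S.card : ℝ) * Bd := by
  have cs := Finset.sum_mul_sq_le_sq_mul_sq S (fun _ => (1:ℝ)) (fun f => |Y f|)
  simp only [one_mul, one_pow] at cs
  have : ∑ f ∈ S, |Y f| ^ 2 = ∑ f ∈ S, (Y f) ^ 2 :=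
    Finset.sum_congr rfl fun f _ => sq_abs _
  rw [this] at cs
  calc (∑ f ∈ S, |Y f|) ^ 2 ≤ (∑ _f ∈ S, (1:ℝ)) * ∑ f ∈ S, (Y f) ^ 2 := cs
    _ = (S.card : ℝ) * ∑ f ∈ S, (Y f) ^ 2 := by rw [Finset.sum_const, nsmul_eq_mul, mul_one]
    _ ≤ (S.card : ℝ) * Bd := by
        apply mul_le_mul_of_nonneg_left hsq (by positivity)


lemma st16_sqrt_sum (n : ℕ) :
    ∑ h ∈ Finset.Ico 1 n, ((h:ℝ) ^ (-(1/2) : ℝ)) ≤ 2 * (n:ℝ) ^ ((1/2) : ℝ) := by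
  have key : ∀ k : ℕ, ((k+1 : ℕ):ℝ) ^ (-(1/2) : ℝ)
      ≤ 2 * (Real.sqrt ((k+1 : ℕ):ℝ) - Real.sqrt (k:ℝ)) := by
    intro k
    have hc : ((k+1:ℕ):ℝ) = (k:ℝ)+1 := by push_cast; ring
    rw [hc]
    have hs1 : (0:ℝ) < Real.sqrt ((k:ℝ)+1) := Real.sqrt_pos.2 (by positivity)
    have hs0 : (0:ℝ) ≤ Real.sqrt k := Real.sqrt_nonneg _
    have hprod : (Real.sqrt (k+1) - Real.sqrt k) * (Real.sqrt (k+1) + Real.sqrt k) = 1 := by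
      have h1 : Real.sqrt (k+1) ^ 2 = (k:ℝ)+1 := Real.sq_sqrt (by positivity)
      have h2 : Real.sqrt k ^ 2 = (k:ℝ) := Real.sq_sqrt (by positivity)
      nlinarith
    have hle : Real.sqrt (k+1) + Real.sqrt k ≤ 2 * Real.sqrt (k+1) := by
      have := Real.sqrt_le_sqrt (show (k:ℝ) ≤ (k:ℝ)+1 by linarith)
      linarith
    have hrw : ((k:ℝ)+1) ^ (-(1/2) : ℝ) = 1 / Real.sqrt ((k:ℝ)+1) := by
      rw [Real.rpow_neg (by positivity), Real.sqrt_eq_rpow]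
      norm_num
    rw [hrw]
    rw [div_le_iff₀ hs1]
    have hsum_pos : (0:ℝ) < Real.sqrt (k+1) + Real.sqrt k := by linarith
    -- (sqrt(k+1)-sqrt k) ≥ 1/(2 sqrt(k+1))
    nlinarith [hprod, hle, hs1]
  calc ∑ h ∈ Finset.Ico 1 n, ((h:ℝ) ^ (-(1/2) : ℝ))
      = ∑ k ∈ Finset.range (n - 1), (((k+1 : ℕ)):ℝ) ^ (-(1/2) : ℝ) := by
        rw [Finset.sum_Ico_eq_sum_range]
        refine Finset.sum_congr rfl fun k _ => ?_
        norm_num [add_comm]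
    _ ≤ ∑ k ∈ Finset.range (n - 1), 2 * (Real.sqrt ((k+1:ℕ):ℝ) - Real.sqrt (k:ℝ)) :=
        Finset.sum_le_sum fun k _ => key k
    _ = 2 * ∑ k ∈ Finset.range (n - 1), (Real.sqrt ((k+1:ℕ):ℝ) - Real.sqrt (k:ℝ)) := by
        rw [Finset.mul_sum]
    _ = 2 * (Real.sqrt ((n-1 : ℕ):ℝ) - Real.sqrt ((0:ℕ):ℝ)) := by
        rw [Finset.sum_range_sub (fun k : ℕ => Real.sqrt (k:ℝ))]
    _ ≤ 2 * (n:ℝ) ^ ((1/2) : ℝ) := by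
        norm_num
        have h1 : Real.sqrt ((n-1 : ℕ):ℝ) ≤ Real.sqrt (n:ℝ) := by
          apply Real.sqrt_le_sqrt
          exact_mod_cast Nat.sub_le n 1
        have h2 : Real.sqrt (n:ℝ) = (n:ℝ) ^ ((1/2) : ℝ) := Real.sqrt_eq_rpow _
        push_cast at h1 ⊢
        linarith [h1, h2.le, h2.ge]

lemma st16_gamma_sum (d : ℝ) (hd0 : 0 < d) (hd : d < 1/2) (n : ℕ) (hn : 1 ≤ n) :
    ∑ h ∈ Finset.Ico 1 n, ((h:ℝ) ^ (2*d - 1))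
      ≤ 2 * ((n:ℝ) ^ ((1/2) : ℝ) + (n:ℝ) ^ (2*d)) := by
  have hn0 : (0:ℝ) < n := by exact_mod_cast hn
  have point : ∀ h ∈ Finset.Ico 1 n, ((h:ℝ) ^ (2*d - 1))
      ≤ (1 + (n:ℝ) ^ (2*d - 1/2)) * ((h:ℝ) ^ (-(1/2) : ℝ)) := by
    intro h hh
    obtain ⟨hh1, hh2⟩ := Finset.mem_Ico.1 hh
    have hhr : (1:ℝ) ≤ (h:ℝ) := by exact_mod_cast hh1
    have hh0 : (0:ℝ) < (h:ℝ) := by linarith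
    have hsplit : ((h:ℝ) ^ (2*d - 1)) = ((h:ℝ) ^ (2*d - 1/2)) * ((h:ℝ) ^ (-(1/2) : ℝ)) := by
      rw [← Real.rpow_add hh0, show 2*d - 1/2 + -(1/2) = 2*d - 1 from by ring]
    rw [hsplit]
    apply mul_le_mul_of_nonneg_right _ (by positivity)
    by_cases hcase : 2*d - 1/2 ≤ 0
    · have h1 : (h:ℝ) ^ (2*d - 1/2) ≤ 1 :=
        Real.rpow_le_one_of_one_le_of_nonpos hhr hcase
      have h2 : (0:ℝ) ≤ (n:ℝ) ^ (2*d - 1/2) := by positivity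
      linarith
    · push_neg at hcase
      have h1 : (h:ℝ) ^ (2*d - 1/2) ≤ (n:ℝ) ^ (2*d - 1/2) := by
        apply Real.rpow_le_rpow hh0.le _ hcase.le
        exact_mod_cast hh2.le
      linarith
  calc ∑ h ∈ Finset.Ico 1 n, ((h:ℝ) ^ (2*d - 1))
      ≤ ∑ h ∈ Finset.Ico 1 n, (1 + (n:ℝ) ^ (2*d - 1/2)) * ((h:ℝ) ^ (-(1/2) : ℝ)) :=
        Finset.sum_le_sum point
    _ = (1 + (n:ℝ) ^ (2*d - 1/2)) * ∑ h ∈ Finset.Ico 1 n, ((h:ℝ) ^ (-(1/2) : ℝ)) := by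
        rw [Finset.mul_sum]
    _ ≤ (1 + (n:ℝ) ^ (2*d - 1/2)) * (2 * (n:ℝ) ^ ((1/2) : ℝ)) := by
        apply mul_le_mul_of_nonneg_left (st16_sqrt_sum n) (by positivity)
    _ = 2 * ((n:ℝ) ^ ((1/2) : ℝ) + (n:ℝ) ^ (2*d - 1/2) * (n:ℝ) ^ ((1/2) : ℝ)) := by ring
    _ = 2 * ((n:ℝ) ^ ((1/2) : ℝ) + (n:ℝ) ^ (2*d)) := by
        rw [← Real.rpow_add hn0, show 2*d - 1/2 + 1/2 = 2*d from by ring]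


lemma st16_bridge (n : ℕ) (hn : 1 ≤ n) (i : ℕ) (f : Fin n → Fin n) :
    (mw n i f : ℝ) / n - 1 / n = st16u n i f / n := by
  have hn0 : (0:ℝ) < n := by exact_mod_cast hn
  have h1 : st16u n i f = (mw n i f : ℝ) - 1 := by
    rw [st16u, mw]
    simp only [st16chi]
    rw [Finset.sum_sub_distrib, Finset.sum_boole, Finset.sum_const, Finset.card_univ,
      Fintype.card_fin, nsmul_eq_mul]
    field_simp
  rw [h1]
  ring

-- existence of the dominating constant M
lemma st16_M_exists (γ : ℕ → ℝ) (c d : ℝ) (hd0 : 0 < d) (hd : d < 1/2)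
    (hγ : Tendsto (fun h : ℕ => γ h / (h : ℝ) ^ (2 * d - 1)) atTop (nhds c)) :
    ∃ M : ℝ, 0 ≤ M ∧ ∀ h : ℕ, 1 ≤ h → |γ h| ≤ M * (h:ℝ) ^ (2 * d - 1) := by
  have := Metric.tendsto_atTop.1 hγ 1 one_pos
  obtain ⟨n₀, hn₀⟩ := this
  set M : ℝ := |c| + 1 + ∑ k ∈ Finset.range (n₀ + 1), |γ k| / (k:ℝ) ^ (2 * d - 1) with hM
  have hterm_nonneg : ∀ k ∈ Finset.range (n₀ + 1), 0 ≤ |γ k| / (k:ℝ) ^ (2 * d - 1) := by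
    intro k _
    apply div_nonneg (abs_nonneg _)
    positivity
  have hsum_nonneg : 0 ≤ ∑ k ∈ Finset.range (n₀ + 1), |γ k| / (k:ℝ) ^ (2 * d - 1) :=
    Finset.sum_nonneg hterm_nonneg
  refine ⟨M, by positivity, ?_⟩
  intro h hh1
  have hpow_pos : (0:ℝ) < (h:ℝ) ^ (2 * d - 1) := by
    apply Real.rpow_pos_of_pos
    exact_mod_cast hh1
  by_cases hcase : n₀ ≤ h
  · have hd1 := hn₀ h hcase
    rw [Real.dist_eq] at hd1
    have h2 : |γ h / (h:ℝ) ^ (2 * d - 1)| ≤ |c| + 1 := by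
      calc |γ h / (h:ℝ) ^ (2 * d - 1)|
          = |γ h / (h:ℝ) ^ (2 * d - 1) - c + c| := by ring_nf
        _ ≤ |γ h / (h:ℝ) ^ (2 * d - 1) - c| + |c| := abs_add_le _ _
        _ ≤ |c| + 1 := by linarith
    rw [abs_div, abs_of_pos hpow_pos] at h2
    rw [div_le_iff₀ hpow_pos] at h2
    calc |γ h| ≤ (|c| + 1) * (h:ℝ) ^ (2 * d - 1) := h2
      _ ≤ M * (h:ℝ) ^ (2 * d - 1) := by
          apply mul_le_mul_of_nonneg_right _ hpow_pos.le
          rw [hM]; linarith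
  · push_neg at hcase
    have hmem : h ∈ Finset.range (n₀ + 1) := Finset.mem_range.2 (by omega)
    have hle : |γ h| / (h:ℝ) ^ (2 * d - 1)
        ≤ ∑ k ∈ Finset.range (n₀ + 1), |γ k| / (k:ℝ) ^ (2 * d - 1) :=
      Finset.single_le_sum hterm_nonneg hmem
    rw [div_le_iff₀ hpow_pos] at hle
    calc |γ h| ≤ (∑ k ∈ Finset.range (n₀ + 1), |γ k| / (k:ℝ) ^ (2 * d - 1))
          * (h:ℝ) ^ (2 * d - 1) := hle
      _ ≤ M * (h:ℝ) ^ (2 * d - 1) := by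
          apply mul_le_mul_of_nonneg_right _ hpow_pos.le
          rw [hM]
          have : (0:ℝ) ≤ |c| + 1 := by positivity
          linarith


lemma st16_expsum (γ : ℕ → ℝ) (d M : ℝ) (hd0 : 0 < d) (hd : d < 1/2) (hM0 : 0 ≤ M)
    (hγM : ∀ h : ℕ, 1 ≤ h → |γ h| ≤ M * (h:ℝ) ^ (2 * d - 1)) (n : ℕ) (hn : 2 ≤ n) :
    ∑ f : Fin n → Fin n,
      |(n : ℝ) ^ ((1 : ℝ) - 2 * d) *
          (γ 0 * ∑ j ∈ Finset.range n, ((mw n j f : ℝ) / n - 1 / n) ^ 2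
            + 2 * ∑ h ∈ Finset.Ico 1 n, γ h *
                ∑ j ∈ Finset.range (n - h),
                  ((mw n j f : ℝ) / n - 1 / n) * ((mw n (j + h) f : ℝ) / n - 1 / n))|
      ≤ (n:ℝ) ^ n * ((|γ 0| + 20 * M) * ((n:ℝ) ^ (-(2*d)) + (n:ℝ) ^ (-(1/2) : ℝ))) := by
  have hn1 : 1 ≤ n := by omega
  have hN : (0:ℝ) < n := by exact_mod_cast (by omega : 0 < n)
  have hN1 : (1:ℝ) ≤ n := by exact_mod_cast hn1
  set N : ℝ := (n:ℝ) with hNdef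
  have hP : (0:ℝ) ≤ N ^ ((1:ℝ) - 2*d) := (Real.rpow_pos_of_pos hN _).le
  -- pointwise bound
  have ptwise : ∀ f : Fin n → Fin n,
      |N ^ ((1 : ℝ) - 2 * d) *
          (γ 0 * ∑ j ∈ Finset.range n, ((mw n j f : ℝ) / n - 1 / n) ^ 2
            + 2 * ∑ h ∈ Finset.Ico 1 n, γ h *
                ∑ j ∈ Finset.range (n - h),
                  ((mw n j f : ℝ) / n - 1 / n) * ((mw n (j + h) f : ℝ) / n - 1 / n))|
      ≤ N ^ ((1:ℝ) - 2*d) *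
          (|γ 0| * ((∑ j ∈ Finset.range n, (st16u n j f) ^ 2) / N ^ 2)
            + 2 * ((∑ h ∈ Finset.Ico 1 n, |γ h| *
                |∑ j ∈ Finset.range (n - h), st16u n j f * st16u n (j + h) f|) / N ^ 2)) := by
    intro f
    have e1 : ∑ j ∈ Finset.range n, ((mw n j f : ℝ) / n - 1 / n) ^ 2
        = (∑ j ∈ Finset.range n, (st16u n j f) ^ 2) / N ^ 2 := by
      rw [Finset.sum_div]
      refine Finset.sum_congr rfl fun j _ => ?_
      rw [st16_bridge n hn1 j f, div_pow]
    have e2 : ∀ h, (∑ j ∈ Finset.range (n - h),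
        ((mw n j f : ℝ) / n - 1 / n) * ((mw n (j + h) f : ℝ) / n - 1 / n))
        = (∑ j ∈ Finset.range (n - h), st16u n j f * st16u n (j + h) f) / N ^ 2 := by
      intro h
      rw [Finset.sum_div]
      refine Finset.sum_congr rfl fun j _ => ?_
      rw [st16_bridge n hn1 j f, st16_bridge n hn1 (j + h) f]
      rw [div_mul_div_comm]
      ring
    rw [e1]
    rw [Finset.sum_congr rfl (fun h (_ : h ∈ Finset.Ico 1 n) => by rw [e2 h])]
    rw [abs_mul, abs_of_nonneg hP]
    apply mul_le_mul_of_nonneg_left _ hP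
    calc |γ 0 * ((∑ j ∈ Finset.range n, (st16u n j f) ^ 2) / N ^ 2)
          + 2 * ∑ h ∈ Finset.Ico 1 n, γ h *
            ((∑ j ∈ Finset.range (n - h), st16u n j f * st16u n (j + h) f) / N ^ 2)|
        ≤ |γ 0 * ((∑ j ∈ Finset.range n, (st16u n j f) ^ 2) / N ^ 2)|
          + |2 * ∑ h ∈ Finset.Ico 1 n, γ h *
            ((∑ j ∈ Finset.range (n - h), st16u n j f * st16u n (j + h) f) / N ^ 2)| :=
          abs_add_le _ _
      _ ≤ |γ 0| * ((∑ j ∈ Finset.range n, (st16u n j f) ^ 2) / N ^ 2)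
          + 2 * ((∑ h ∈ Finset.Ico 1 n, |γ h| *
              |∑ j ∈ Finset.range (n - h), st16u n j f * st16u n (j + h) f|) / N ^ 2) := by
          have t1 : |γ 0 * ((∑ j ∈ Finset.range n, (st16u n j f) ^ 2) / N ^ 2)|
              = |γ 0| * ((∑ j ∈ Finset.range n, (st16u n j f) ^ 2) / N ^ 2) := by
            rw [abs_mul, abs_of_nonneg (show (0:ℝ) ≤ (∑ j ∈ Finset.range n,
              (st16u n j f) ^ 2) / N ^ 2 from div_nonneg
              (Finset.sum_nonneg fun j _ => sq_nonneg _) (by positivity))]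
          have t2 : |2 * ∑ h ∈ Finset.Ico 1 n, γ h *
              ((∑ j ∈ Finset.range (n - h), st16u n j f * st16u n (j + h) f) / N ^ 2)|
              ≤ 2 * ((∑ h ∈ Finset.Ico 1 n, |γ h| *
                |∑ j ∈ Finset.range (n - h), st16u n j f * st16u n (j + h) f|) / N ^ 2) := by
            rw [abs_mul, abs_two]
            apply mul_le_mul_of_nonneg_left _ (by norm_num : (0:ℝ) ≤ 2)
            calc |∑ h ∈ Finset.Ico 1 n, γ h *
                ((∑ j ∈ Finset.range (n - h), st16u n j f * st16u n (j + h) f) / N ^ 2)|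
                ≤ ∑ h ∈ Finset.Ico 1 n, |γ h *
                  ((∑ j ∈ Finset.range (n - h), st16u n j f * st16u n (j + h) f) / N ^ 2)| :=
                  Finset.abs_sum_le_sum_abs _ _
              _ = (∑ h ∈ Finset.Ico 1 n, |γ h| *
                  |∑ j ∈ Finset.range (n - h), st16u n j f * st16u n (j + h) f|) / N ^ 2 := by
                  rw [Finset.sum_div]
                  refine Finset.sum_congr rfl fun h _ => ?_
                  rw [abs_mul, abs_div, abs_of_nonneg (by positivity : (0:ℝ) ≤ N ^ 2)]
                  ring
          linarith
  -- sum the pointwise bound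
  have sum_bound := Finset.sum_le_sum (fun f (_ : f ∈ (Finset.univ : Finset (Fin n → Fin n))) => ptwise f)
  refine le_trans sum_bound ?_
  -- push sums inside
  have card_eq : ((Finset.univ : Finset (Fin n → Fin n)).card : ℝ) = N ^ n := by
    rw [Finset.card_univ, Fintype.card_fun, Fintype.card_fin]
    push_cast
    ring
  have F1 : ∑ f : Fin n → Fin n, ((∑ j ∈ Finset.range n, (st16u n j f) ^ 2) / N ^ 2)
      ≤ N * N ^ n / N ^ 2 := by
    rw [← Finset.sum_div]
    apply div_le_div_of_nonneg_right _ (by positivity)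
    · rw [Finset.sum_comm]
      calc ∑ j ∈ Finset.range n, ∑ f : Fin n → Fin n, (st16u n j f) ^ 2
          ≤ ∑ j ∈ Finset.range n, (N:ℝ) ^ n := Finset.sum_le_sum fun j hj =>
            st16_usq n j hn (Finset.mem_range.1 hj)
        _ = N * N ^ n := by
            rw [Finset.sum_const, Finset.card_range, nsmul_eq_mul]
  have F2 : ∀ h ∈ Finset.Ico 1 n,
      ∑ f : Fin n → Fin n, |∑ j ∈ Finset.range (n - h), st16u n j f * st16u n (j + h) f|
        ≤ 5 * (N ^ n * N ^ ((1/2) : ℝ)) := by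
    intro h hh
    have hh1 : 1 ≤ h := (Finset.mem_Ico.1 hh).1
    have hsq := st16_Ysq n h hn hh1
    have hcs := st16_abssum n Finset.univ
      (fun f => ∑ j ∈ Finset.range (n - h), st16u n j f * st16u n (j + h) f)
      (24 * (n:ℝ) ^ (n + 1)) (by positivity) hsq
    rw [card_eq] at hcs
    have rhs_nonneg : (0:ℝ) ≤ 5 * (N ^ n * N ^ ((1/2) : ℝ)) := by positivity
    have lhs_nonneg : (0:ℝ) ≤ ∑ f : Fin n → Fin n,
        |∑ j ∈ Finset.range (n - h), st16u n j f * st16u n (j + h) f| :=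
      Finset.sum_nonneg fun f _ => abs_nonneg _
    have sq_rhs : (5 * (N ^ n * N ^ ((1/2) : ℝ))) ^ 2 = 25 * (N ^ n * (N ^ n * N)) := by
      have : (N ^ ((1/2) : ℝ)) ^ 2 = N := by
        rw [sq, ← Real.rpow_add hN]
        norm_num
      calc (5 * (N ^ n * N ^ ((1/2) : ℝ))) ^ 2
          = 25 * ((N ^ n) ^ 2 * (N ^ ((1/2) : ℝ)) ^ 2) := by ring
        _ = 25 * ((N ^ n) ^ 2 * N) := by rw [this]
        _ = 25 * (N ^ n * (N ^ n * N)) := by ring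
    have key : (∑ f : Fin n → Fin n,
        |∑ j ∈ Finset.range (n - h), st16u n j f * st16u n (j + h) f|) ^ 2
        ≤ (5 * (N ^ n * N ^ ((1/2) : ℝ))) ^ 2 := by
      rw [sq_rhs]
      calc (∑ f : Fin n → Fin n,
          |∑ j ∈ Finset.range (n - h), st16u n j f * st16u n (j + h) f|) ^ 2
          ≤ N ^ n * (24 * N ^ (n + 1)) := hcs
        _ = 24 * (N ^ n * (N ^ n * N)) := by rw [pow_succ]; ring
        _ ≤ 25 * (N ^ n * (N ^ n * N)) := by
            have : (0:ℝ) ≤ N ^ n * (N ^ n * N) := by positivity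
            linarith
    calc ∑ f : Fin n → Fin n,
        |∑ j ∈ Finset.range (n - h), st16u n j f * st16u n (j + h) f|
        = Real.sqrt ((∑ f : Fin n → Fin n,
            |∑ j ∈ Finset.range (n - h), st16u n j f * st16u n (j + h) f|) ^ 2) :=
          (Real.sqrt_sq lhs_nonneg).symm
      _ ≤ Real.sqrt ((5 * (N ^ n * N ^ ((1/2) : ℝ))) ^ 2) := Real.sqrt_le_sqrt key
      _ = 5 * (N ^ n * N ^ ((1/2) : ℝ)) := Real.sqrt_sq rhs_nonneg
  have F3 : ∑ h ∈ Finset.Ico 1 n, |γ h| ≤ M * (2 * (N ^ ((1/2) : ℝ) + N ^ (2*d))) := by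
    calc ∑ h ∈ Finset.Ico 1 n, |γ h|
        ≤ ∑ h ∈ Finset.Ico 1 n, M * (h:ℝ) ^ (2 * d - 1) := Finset.sum_le_sum fun h hh =>
          hγM h (Finset.mem_Ico.1 hh).1
      _ = M * ∑ h ∈ Finset.Ico 1 n, (h:ℝ) ^ (2 * d - 1) := by rw [Finset.mul_sum]
      _ ≤ M * (2 * (N ^ ((1/2) : ℝ) + N ^ (2*d))) :=
          mul_le_mul_of_nonneg_left (st16_gamma_sum d hd0 hd n hn1) hM0
  -- combine
  have cross : ∑ f : Fin n → Fin n, ((∑ h ∈ Finset.Ico 1 n, |γ h| *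
      |∑ j ∈ Finset.range (n - h), st16u n j f * st16u n (j + h) f|) / N ^ 2)
      ≤ (M * (2 * (N ^ ((1/2) : ℝ) + N ^ (2*d)))) * (5 * (N ^ n * N ^ ((1/2) : ℝ))) / N ^ 2 := by
    rw [← Finset.sum_div]
    apply div_le_div_of_nonneg_right _ (by positivity)
    · rw [Finset.sum_comm]
      calc ∑ h ∈ Finset.Ico 1 n, ∑ f : Fin n → Fin n, |γ h| *
            |∑ j ∈ Finset.range (n - h), st16u n j f * st16u n (j + h) f|
          = ∑ h ∈ Finset.Ico 1 n, |γ h| * ∑ f : Fin n → Fin n,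
              |∑ j ∈ Finset.range (n - h), st16u n j f * st16u n (j + h) f| := by
            refine Finset.sum_congr rfl fun h _ => ?_
            rw [Finset.mul_sum]
        _ ≤ ∑ h ∈ Finset.Ico 1 n, |γ h| * (5 * (N ^ n * N ^ ((1/2) : ℝ))) :=
            Finset.sum_le_sum fun h hh => mul_le_mul_of_nonneg_left (F2 h hh) (abs_nonneg _)
        _ = (∑ h ∈ Finset.Ico 1 n, |γ h|) * (5 * (N ^ n * N ^ ((1/2) : ℝ))) := by
            rw [Finset.sum_mul]
        _ ≤ (M * (2 * (N ^ ((1/2) : ℝ) + N ^ (2*d)))) * (5 * (N ^ n * N ^ ((1/2) : ℝ))) :=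
            mul_le_mul_of_nonneg_right F3 (by positivity)
  -- final algebraic collapse
  rw [← Finset.mul_sum]
  rw [Finset.sum_add_distrib, ← Finset.mul_sum, ← Finset.mul_sum]
  set SumS := ∑ f : Fin n → Fin n, ((∑ j ∈ Finset.range n, (st16u n j f) ^ 2) / N ^ 2) with hSumS
  set SumC := ∑ f : Fin n → Fin n, ((∑ h ∈ Finset.Ico 1 n, |γ h| *
      |∑ j ∈ Finset.range (n - h), st16u n j f * st16u n (j + h) f|) / N ^ 2) with hSumC
  have hSumS0 : 0 ≤ SumS := Finset.sum_nonneg fun f _ => div_nonneg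
    (Finset.sum_nonneg fun j _ => sq_nonneg _) (by positivity)
  have hSumC0 : 0 ≤ SumC := Finset.sum_nonneg fun f _ => div_nonneg
    (Finset.sum_nonneg fun h _ => mul_nonneg (abs_nonneg _) (abs_nonneg _)) (by positivity)
  have step1 : N ^ ((1:ℝ) - 2*d) * (|γ 0| * SumS + 2 * SumC)
      ≤ N ^ ((1:ℝ) - 2*d) * (|γ 0| * (N * N ^ n / N ^ 2)
        + 2 * ((M * (2 * (N ^ ((1/2) : ℝ) + N ^ (2*d)))) * (5 * (N ^ n * N ^ ((1/2) : ℝ))) / N ^ 2)) := by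
    apply mul_le_mul_of_nonneg_left _ hP
    have b1 : |γ 0| * SumS ≤ |γ 0| * (N * N ^ n / N ^ 2) :=
      mul_le_mul_of_nonneg_left F1 (abs_nonneg _)
    have b2 : 2 * SumC ≤ 2 * ((M * (2 * (N ^ ((1/2) : ℝ) + N ^ (2*d))))
        * (5 * (N ^ n * N ^ ((1/2) : ℝ))) / N ^ 2) :=
      mul_le_mul_of_nonneg_left cross (by norm_num)
    linarith
  refine step1.trans ?_
  -- rpow algebra
  have s1 : N * N ^ n / N ^ 2 = N ^ (n - 1) := by
    have h1 : N * N ^ n = N ^ (n + 1) := (pow_succ' N n).symm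
    rw [h1, show n - 1 = n + 1 - 2 from by omega]
    exact (pow_sub₀ N hN.ne' (by omega)).symm
  have s2 : N ^ ((1:ℝ) - 2*d) * N ^ (n - 1) = N ^ n * N ^ (-(2*d)) := by
    rw [← Real.rpow_natCast N (n - 1), ← Real.rpow_natCast N n,
      ← Real.rpow_add hN, ← Real.rpow_add hN]
    congr 1
    rw [Nat.cast_sub hn1]
    push_cast
    ring
  have s3 : N ^ ((1:ℝ) - 2*d) * (N ^ ((1/2) : ℝ) * (N ^ n * N ^ ((1/2) : ℝ)) / N ^ 2)
      = N ^ n * N ^ (-(2*d)) := by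
    rw [← Real.rpow_natCast N n, ← Real.rpow_natCast N 2, div_eq_mul_inv,
      ← Real.rpow_neg hN.le]
    simp only [← Real.rpow_add hN]
    congr 1
    push_cast
    ring
  have s4 : N ^ ((1:ℝ) - 2*d) * (N ^ (2*d) * (N ^ n * N ^ ((1/2) : ℝ)) / N ^ 2)
      = N ^ n * N ^ (-(1/2) : ℝ) := by
    rw [← Real.rpow_natCast N n, ← Real.rpow_natCast N 2, div_eq_mul_inv,
      ← Real.rpow_neg hN.le]
    simp only [← Real.rpow_add hN]
    congr 1
    push_cast
    ring
  have E : N ^ ((1:ℝ) - 2*d) * (|γ 0| * (N * N ^ n / N ^ 2)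
      + 2 * ((M * (2 * (N ^ ((1/2) : ℝ) + N ^ (2*d)))) * (5 * (N ^ n * N ^ ((1/2) : ℝ))) / N ^ 2))
      = |γ 0| * (N ^ n * N ^ (-(2*d)))
        + 20 * M * (N ^ n * N ^ (-(2*d)) + N ^ n * N ^ (-(1/2) : ℝ)) := by
    have s12 : N ^ ((1:ℝ) - 2*d) * (N * N ^ n / N ^ 2) = N ^ n * N ^ (-(2*d)) := by
      rw [s1]; exact s2
    linear_combination |γ 0| * s12 + 20 * M * s3 + 20 * M * s4
  rw [E]
  have hgap : 0 ≤ |γ 0| * (N ^ n * N ^ (-(1/2) : ℝ)) :=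
    mul_nonneg (abs_nonneg _) (mul_nonneg (pow_nonneg hN.le n)
      (Real.rpow_pos_of_pos hN _).le)
  nlinarith [hgap]


/-- for a long memory process with autocovariances `γ_h ~ c' h^{2d−1}`
(`0 < d < 1/2`), the conditional (given the weights) variance of
`n^{1/2−d} Σᵢ (wᵢ/n − 1/n) Xᵢ`, namely
`n^{1−2d} (γ_0 Σⱼ(wⱼ/n − 1/n)² + 2 Σ_h γ_h Σⱼ (wⱼ/n − 1/n)(w_{j+h}/n − 1/n))`,
tends to `0` in probability-`P_w`. -/
theorem stmt16 (γ : ℕ → ℝ) (d c : ℝ) (hd0 : 0 < d) (hd : d < 1 / 2) (hc : 0 < c)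
    (hγ : Tendsto (fun h : ℕ => γ h / (h : ℝ) ^ (2 * d - 1)) atTop (nhds c)) :
    ∀ ε > (0 : ℝ), Tendsto (fun n : ℕ =>
        multinomialMeasure n
          {f | ε ≤ |(n : ℝ) ^ ((1 : ℝ) - 2 * d) *
              (γ 0 * ∑ j ∈ Finset.range n, ((mw n j f : ℝ) / n - 1 / n) ^ 2
                + 2 * ∑ h ∈ Finset.Ico 1 n, γ h *
                    ∑ j ∈ Finset.range (n - h),
                      ((mw n j f : ℝ) / n - 1 / n) * ((mw n (j + h) f : ℝ) / n - 1 / n))|})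
      atTop (nhds 0) := by
  intro ε hε
  obtain ⟨M, hM0, hγM⟩ := st16_M_exists γ c d hd0 hd hγ
  set C : ℝ := |γ 0| + 20 * M with hC
  have hC0 : 0 ≤ C := by positivity
  set bound : ℕ → ENNReal := fun n =>
    ENNReal.ofReal (C * ((n:ℝ) ^ (-(2*d)) + (n:ℝ) ^ (-(1/2) : ℝ)) / ε) with hbound
  -- the bound tends to zero
  have hb0 : Tendsto bound atTop (nhds 0) := by
    have hr1 : Tendsto (fun n : ℕ => (n:ℝ) ^ (-(2*d))) atTop (nhds 0) :=
      (tendsto_rpow_neg_atTop (by linarith)).comp tendsto_natCast_atTop_atTop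
    have hr2 : Tendsto (fun n : ℕ => (n:ℝ) ^ (-(1/2) : ℝ)) atTop (nhds 0) :=
      (tendsto_rpow_neg_atTop (by norm_num)).comp tendsto_natCast_atTop_atTop
    have hreal : Tendsto (fun n : ℕ => C * ((n:ℝ) ^ (-(2*d)) + (n:ℝ) ^ (-(1/2) : ℝ)) / ε)
        atTop (nhds 0) := by
      have := ((hr1.add hr2).const_mul C).div_const ε
      simpa using this
    have := ENNReal.tendsto_ofReal hreal
    simpa [hbound] using this
  -- eventual inequality
  have h_ev : ∀ᶠ n in atTop, multinomialMeasure n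
      {f | ε ≤ |(n : ℝ) ^ ((1 : ℝ) - 2 * d) *
          (γ 0 * ∑ j ∈ Finset.range n, ((mw n j f : ℝ) / n - 1 / n) ^ 2
            + 2 * ∑ h ∈ Finset.Ico 1 n, γ h *
                ∑ j ∈ Finset.range (n - h),
                  ((mw n j f : ℝ) / n - 1 / n) * ((mw n (j + h) f : ℝ) / n - 1 / n))|}
      ≤ bound n := by
    filter_upwards [eventually_ge_atTop 2] with n hn
    set Z : (Fin n → Fin n) → ℝ := fun f => (n : ℝ) ^ ((1 : ℝ) - 2 * d) *
        (γ 0 * ∑ j ∈ Finset.range n, ((mw n j f : ℝ) / n - 1 / n) ^ 2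
          + 2 * ∑ h ∈ Finset.Ico 1 n, γ h *
              ∑ j ∈ Finset.range (n - h),
                ((mw n j f : ℝ) / n - 1 / n) * ((mw n (j + h) f : ℝ) / n - 1 / n)) with hZ
    set E : Set (Fin n → Fin n) := {f | ε ≤ |Z f|} with hE
    have hP : (0:ℝ) ≤ (n:ℝ) ^ n * (C * ((n:ℝ) ^ (-(2*d)) + (n:ℝ) ^ (-(1/2) : ℝ))) := by
      have : (0:ℝ) ≤ (n:ℝ) := by positivity
      positivity
    -- real Markov inequality
    have markov : (E.toFinite.toFinset.card : ℝ) * ε ≤ ∑ f : Fin n → Fin n, |Z f| := by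
      calc (E.toFinite.toFinset.card : ℝ) * ε = ∑ _f ∈ E.toFinite.toFinset, ε := by
            rw [Finset.sum_const, nsmul_eq_mul]
        _ ≤ ∑ f ∈ E.toFinite.toFinset, |Z f| := Finset.sum_le_sum fun f hf =>
            (Set.Finite.mem_toFinset E.toFinite).1 hf
        _ ≤ ∑ f : Fin n → Fin n, |Z f| :=
            Finset.sum_le_sum_of_subset_of_nonneg (Finset.subset_univ _)
              (fun f _ _ => abs_nonneg _)
    have hsum := st16_expsum γ d M hd0 hd hM0 hγM n hn
    have hcard : (E.toFinite.toFinset.card : ℝ)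
        ≤ (n:ℝ) ^ n * (C * ((n:ℝ) ^ (-(2*d)) + (n:ℝ) ^ (-(1/2) : ℝ))) / ε := by
      rw [le_div_iff₀ hε]
      calc (E.toFinite.toFinset.card : ℝ) * ε ≤ ∑ f : Fin n → Fin n, |Z f| := markov
        _ ≤ (n:ℝ) ^ n * ((|γ 0| + 20 * M) * ((n:ℝ) ^ (-(2*d)) + (n:ℝ) ^ (-(1/2) : ℝ))) := hsum
        _ = (n:ℝ) ^ n * (C * ((n:ℝ) ^ (-(2*d)) + (n:ℝ) ^ (-(1/2) : ℝ))) := by rw [hC]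
    -- to ENNReal
    have hmeas : multinomialMeasure n E
        = ((n^n : ℕ) : ENNReal)⁻¹ * (E.toFinite.toFinset.card : ENNReal) := by
      rw [multinomialMeasure, Measure.smul_apply, smul_eq_mul,
        Measure.count_apply_finite E E.toFinite, Fintype.card_fun, Fintype.card_fin]
    rw [hmeas]
    have hnn0 : ((n^n : ℕ) : ENNReal) ≠ 0 := by
      simp only [ne_eq, Nat.cast_eq_zero]
      positivity
    have hnntop : ((n^n : ℕ) : ENNReal) ≠ ⊤ := ENNReal.natCast_ne_top _
    have hcard' : (E.toFinite.toFinset.card : ENNReal)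
        ≤ ((n^n : ℕ) : ENNReal) * bound n := by
      have step : (E.toFinite.toFinset.card : ENNReal)
          = ENNReal.ofReal (E.toFinite.toFinset.card : ℝ) := by
        rw [ENNReal.ofReal_natCast]
      rw [step]
      calc ENNReal.ofReal (E.toFinite.toFinset.card : ℝ)
          ≤ ENNReal.ofReal ((n:ℝ) ^ n
              * (C * ((n:ℝ) ^ (-(2*d)) + (n:ℝ) ^ (-(1/2) : ℝ))) / ε) :=
            ENNReal.ofReal_le_ofReal hcard
        _ = ENNReal.ofReal ((n:ℝ) ^ n
              * (C * ((n:ℝ) ^ (-(2*d)) + (n:ℝ) ^ (-(1/2) : ℝ)) / ε)) := by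
            rw [mul_div_assoc]
        _ = ENNReal.ofReal ((n:ℝ) ^ n)
              * ENNReal.ofReal (C * ((n:ℝ) ^ (-(2*d)) + (n:ℝ) ^ (-(1/2) : ℝ)) / ε) :=
            ENNReal.ofReal_mul (by positivity)
        _ = ((n^n : ℕ) : ENNReal) * bound n := by
            congr 1
            rw [show ((n:ℝ) ^ n) = ((n^n : ℕ) : ℝ) from by push_cast; ring,
              ENNReal.ofReal_natCast]
    calc ((n^n : ℕ) : ENNReal)⁻¹ * (E.toFinite.toFinset.card : ENNReal)
        ≤ ((n^n : ℕ) : ENNReal)⁻¹ * (((n^n : ℕ) : ENNReal) * bound n) :=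
          mul_le_mul_right hcard' _
      _ = bound n := by
          rw [← mul_assoc, ENNReal.inv_mul_cancel hnn0 hnntop, one_mul]
  exact tendsto_of_tendsto_of_tendsto_of_le_of_le' tendsto_const_nhds hb0
    (Filter.Eventually.of_forall fun n => zero_le) h_ev
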